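/- Let (M,g) be a Riemannian n-manifold (n ≥ 3). If at some point p ∈ M it holds that for every unit vector V ∈ T_pM and every orthonormal pair E_i, E_j ⊥ V one has Rm_g(E_i,V,V,E_i) = Rm_g(E_j,V,V,E_j) and Rm_g(E_i,V,V,E_j) = 0, then all 2-planes at T_pM have the same sectional curvature. -/

import Mathlib

noncomputable section

open scoped BigOperators

/-- The Euclidean inner product on `ℝ^n` (the metric `g` at the point `p` in
orthonormal coordinates). -/
def dotProd (n : ℕ) (u w : Fin n → ℝ) : ℝ := ∑ i, u i * w i

/-- Evaluation of a 4-tensor with components `T` on four vectors. -/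
def eval4 (n : ℕ) (T : Fin n → Fin n → Fin n → Fin n → ℝ)
    (u w z y : Fin n → ℝ) : ℝ :=
  ∑ a, ∑ b, ∑ c, ∑ d, T a b c d * u a * w b * z c * y d

namespace Aux

variable {n : ℕ}

lemma dotProd_comm (u w : Fin n → ℝ) : dotProd n u w = dotProd n w u := by
  simp [dotProd, mul_comm]

lemma dotProd_sub_left (u v w : Fin n → ℝ) :
    dotProd n (u - v) w = dotProd n u w - dotProd n v w := by
  simp [dotProd, sub_mul, Finset.sum_sub_distrib]

lemma dotProd_sub_right (u v w : Fin n → ℝ) :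
    dotProd n u (v - w) = dotProd n u v - dotProd n u w := by
  simp [dotProd, mul_sub, Finset.sum_sub_distrib]

lemma dotProd_smul_left (t : ℝ) (u w : Fin n → ℝ) :
    dotProd n (t • u) w = t * dotProd n u w := by
  simp [dotProd, Finset.mul_sum, mul_assoc]

lemma dotProd_smul_right (t : ℝ) (u w : Fin n → ℝ) :
    dotProd n u (t • w) = t * dotProd n u w := by
  simp only [dotProd, Finset.mul_sum, Pi.smul_apply, smul_eq_mul]
  exact Finset.sum_congr rfl fun i _ => by ring

lemma dotProd_self_eq_zero {w : Fin n → ℝ} (h : dotProd n w w = 0) : w = 0 := by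
  have := (Finset.sum_eq_zero_iff_of_nonneg (fun i _ => mul_self_nonneg (w i))).1 h
  funext i
  exact mul_self_eq_zero.1 (this i (Finset.mem_univ i))

section eval4

variable (T : Fin n → Fin n → Fin n → Fin n → ℝ)

lemma eval4_add1 (u u' w z y : Fin n → ℝ) :
    eval4 n T (u + u') w z y = eval4 n T u w z y + eval4 n T u' w z y := by
  simp only [eval4, ← Finset.sum_add_distrib]
  refine Finset.sum_congr rfl fun a _ => Finset.sum_congr rfl fun b _ =>
    Finset.sum_congr rfl fun c _ => Finset.sum_congr rfl fun d _ => ?_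
  simp only [Pi.add_apply]; ring

lemma eval4_add4 (u w z y y' : Fin n → ℝ) :
    eval4 n T u w z (y + y') = eval4 n T u w z y + eval4 n T u w z y' := by
  simp only [eval4, ← Finset.sum_add_distrib]
  refine Finset.sum_congr rfl fun a _ => Finset.sum_congr rfl fun b _ =>
    Finset.sum_congr rfl fun c _ => Finset.sum_congr rfl fun d _ => ?_
  simp only [Pi.add_apply]; ring

lemma eval4_smul1 (t : ℝ) (u w z y : Fin n → ℝ) :
    eval4 n T (t • u) w z y = t * eval4 n T u w z y := by
  simp only [eval4, Finset.mul_sum]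
  refine Finset.sum_congr rfl fun a _ => Finset.sum_congr rfl fun b _ =>
    Finset.sum_congr rfl fun c _ => Finset.sum_congr rfl fun d _ => ?_
  simp only [Pi.smul_apply, smul_eq_mul]; ring

lemma eval4_smul4 (t : ℝ) (u w z y : Fin n → ℝ) :
    eval4 n T u w z (t • y) = t * eval4 n T u w z y := by
  simp only [eval4, Finset.mul_sum]
  refine Finset.sum_congr rfl fun a _ => Finset.sum_congr rfl fun b _ =>
    Finset.sum_congr rfl fun c _ => Finset.sum_congr rfl fun d _ => ?_
  simp only [Pi.smul_apply, smul_eq_mul]; ring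

lemma eval4_zero4 (u w z : Fin n → ℝ) : eval4 n T u w z 0 = 0 := by
  simp [eval4]

lemma sum4_comm (f : Fin n → Fin n → Fin n → Fin n → ℝ) :
    ∑ a, ∑ b, ∑ c, ∑ d, f a b c d = ∑ c, ∑ d, ∑ a, ∑ b, f a b c d :=
  calc ∑ a, ∑ b, ∑ c, ∑ d, f a b c d
      = ∑ a, ∑ c, ∑ b, ∑ d, f a b c d :=
        Finset.sum_congr rfl fun a _ => Finset.sum_comm
    _ = ∑ c, ∑ a, ∑ b, ∑ d, f a b c d := Finset.sum_comm
    _ = ∑ c, ∑ a, ∑ d, ∑ b, f a b c d :=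
        Finset.sum_congr rfl fun c _ => Finset.sum_congr rfl fun a _ => Finset.sum_comm
    _ = ∑ c, ∑ d, ∑ a, ∑ b, f a b c d :=
        Finset.sum_congr rfl fun c _ => Finset.sum_comm

lemma eval4_pair (hpair : ∀ a b c d, T a b c d = T c d a b) (u w z y : Fin n → ℝ) :
    eval4 n T u w z y = eval4 n T z y u w := by
  unfold eval4
  rw [sum4_comm]
  refine Finset.sum_congr rfl fun a _ => Finset.sum_congr rfl fun b _ =>
    Finset.sum_congr rfl fun c _ => Finset.sum_congr rfl fun d _ => ?_
  rw [hpair]; ring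

lemma eval4_skew1 (hskew₁ : ∀ a b c d, T a b c d = -T b a c d) (u w z y : Fin n → ℝ) :
    eval4 n T u w z y = -eval4 n T w u z y := by
  unfold eval4
  simp only [← Finset.sum_neg_distrib]
  rw [Finset.sum_comm]
  refine Finset.sum_congr rfl fun a _ => Finset.sum_congr rfl fun b _ =>
    Finset.sum_congr rfl fun c _ => Finset.sum_congr rfl fun d _ => ?_
  rw [hskew₁]; ring

lemma eval4_skew2 (hskew₂ : ∀ a b c d, T a b c d = -T a b d c) (u w z y : Fin n → ℝ) :
    eval4 n T u w z y = -eval4 n T u w y z := by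
  unfold eval4
  simp only [← Finset.sum_neg_distrib]
  refine Finset.sum_congr rfl fun a _ => Finset.sum_congr rfl fun b _ => ?_
  rw [Finset.sum_comm]
  refine Finset.sum_congr rfl fun c _ => Finset.sum_congr rfl fun d _ => ?_
  rw [hskew₂]; ring

lemma eval4_middle (hskew₁ : ∀ a b c d, T a b c d = -T b a c d)
    (hskew₂ : ∀ a b c d, T a b c d = -T a b d c)
    (hpair : ∀ a b c d, T a b c d = T c d a b)
    (V e f : Fin n → ℝ) :
    eval4 n T f V V e = eval4 n T e V V f := by
  rw [eval4_pair T hpair, eval4_skew1 T hskew₁, eval4_skew2 T hskew₂ e V f V]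
  ring_nf

end eval4

lemma dotProd_eq_inner (u w : Fin n → ℝ) :
    dotProd n u w = @inner ℝ (EuclideanSpace ℝ (Fin n)) _ (WithLp.toLp 2 u) (WithLp.toLp 2 w) := by
  simp [dotProd, PiLp.inner_apply, RCLike.inner_apply, conj_trivial, mul_comm]

lemma exists_unit_orth (hn : 3 ≤ n) (v w : Fin n → ℝ) :
    ∃ x : Fin n → ℝ, dotProd n x x = 1 ∧ dotProd n x v = 0 ∧ dotProd n x w = 0 := by
  classical
  set E := EuclideanSpace ℝ (Fin n)
  let K : Submodule ℝ E := Submodule.span ℝ {WithLp.toLp 2 v, WithLp.toLp 2 w}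
  have hdim : Module.finrank ℝ K ≤ 2 := by
    refine (finrank_span_le_card ({WithLp.toLp 2 v, WithLp.toLp 2 w} : Set E)).trans ?_
    have hsub : ({WithLp.toLp 2 v, WithLp.toLp 2 w} : Set E).toFinset ⊆ ({WithLp.toLp 2 v, WithLp.toLp 2 w} : Finset E) := by
      intro x hx; simpa using hx
    calc ({WithLp.toLp 2 v, WithLp.toLp 2 w} : Set E).toFinset.card ≤ ({WithLp.toLp 2 v, WithLp.toLp 2 w} : Finset E).card :=
          Finset.card_le_card hsub
      _ ≤ 2 := (Finset.card_insert_le _ _).trans (by simp)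
  have hE : Module.finrank ℝ E = n := finrank_euclideanSpace_fin
  have horth : Module.finrank ℝ Kᗮ ≠ 0 := by
    have := Submodule.finrank_add_finrank_orthogonal K
    omega
  have hne : Kᗮ ≠ ⊥ := by
    intro h
    rw [h] at horth
    simp at horth
  obtain ⟨y, hyK, hy0⟩ := Submodule.exists_mem_ne_zero_of_ne_bot hne
  have hny : ‖y‖ ≠ 0 := norm_ne_zero_iff.2 hy0
  refine ⟨WithLp.ofLp (‖y‖⁻¹ • y), ?_, ?_, ?_⟩
  · rw [dotProd_eq_inner, WithLp.toLp_ofLp]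
    rw [real_inner_self_eq_norm_sq]
    rw [norm_smul]
    rw [norm_inv, norm_norm, inv_mul_cancel₀ hny, one_pow]
  · rw [dotProd_eq_inner, WithLp.toLp_ofLp, real_inner_smul_left]
    have hv : @inner ℝ E _ (WithLp.toLp 2 v) y = 0 := hyK (WithLp.toLp 2 v) (Submodule.subset_span (by simp))
    rw [show @inner ℝ E _ y (WithLp.toLp 2 v) = @inner ℝ E _ (WithLp.toLp 2 v) y from real_inner_comm (F := E) (WithLp.toLp 2 v) y, hv, mul_zero]
  · rw [dotProd_eq_inner, WithLp.toLp_ofLp, real_inner_smul_left]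
    have hw : @inner ℝ E _ (WithLp.toLp 2 w) y = 0 := hyK (WithLp.toLp 2 w) (Submodule.subset_span (by simp))
    rw [show @inner ℝ E _ y (WithLp.toLp 2 w) = @inner ℝ E _ (WithLp.toLp 2 w) y from real_inner_comm (F := E) (WithLp.toLp 2 w) y, hw, mul_zero]


lemma dotProd_zero_right (u : Fin n → ℝ) : dotProd n u 0 = 0 := by simp [dotProd]

lemma eval4_zero1 (T : Fin n → Fin n → Fin n → Fin n → ℝ) (w z y : Fin n → ℝ) :
    eval4 n T 0 w z y = 0 := by simp [eval4]

lemma keyA (T : Fin n → Fin n → Fin n → Fin n → ℝ)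
    (hskew₁ : ∀ a b c d, T a b c d = -T b a c d)
    (hskew₂ : ∀ a b c d, T a b c d = -T a b d c)
    (hpair : ∀ a b c d, T a b c d = T c d a b)
    (hyp : ∀ V e f : Fin n → ℝ,
      dotProd n V V = 1 → dotProd n e e = 1 → dotProd n f f = 1 →
      dotProd n e f = 0 → dotProd n e V = 0 → dotProd n f V = 0 →
      eval4 n T e V V e = eval4 n T f V V f ∧ eval4 n T e V V f = 0)
    (V e e' : Fin n → ℝ)
    (hV : dotProd n V V = 1) (he : dotProd n e e = 1) (he' : dotProd n e' e' = 1)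
    (heV : dotProd n e V = 0) (he'V : dotProd n e' V = 0) :
    eval4 n T e V V e = eval4 n T e' V V e' := by
  set t := dotProd n e e' with ht
  set w := e' - t • e with hw
  have hwe : dotProd n w e = 0 := by
    rw [hw, dotProd_sub_left, dotProd_smul_left, he, dotProd_comm e' e, ← ht]; ring
  have hwV : dotProd n w V = 0 := by
    rw [hw, dotProd_sub_left, dotProd_smul_left, heV, he'V]; ring
  have hww : dotProd n w w = 1 - t * t := by
    rw [hw]
    simp only [dotProd_sub_left, dotProd_sub_right, dotProd_smul_left, dotProd_smul_right,
      he, he']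
    rw [dotProd_comm e' e, ← ht]; ring
  have he'decomp : e' = t • e + w := by rw [hw]; abel
  have expand : eval4 n T e' V V e' =
      t * (t * eval4 n T e V V e) + t * eval4 n T e V V w
      + t * eval4 n T w V V e + eval4 n T w V V w := by
    conv_lhs => rw [he'decomp]
    simp only [eval4_add1, eval4_add4, eval4_smul1, eval4_smul4]
    ring
  by_cases hw0 : w = 0
  · have hwz : dotProd n w w = 0 := by rw [hw0]; simp [dotProd]
    have ht2 : t * t = 1 := by rw [hww] at hwz; linarith
    rw [expand, hw0, eval4_zero4, eval4_zero1, eval4_zero1]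
    rw [← mul_assoc, ht2]; ring
  · have h0 : dotProd n w w ≠ 0 := fun h => hw0 (dotProd_self_eq_zero h)
    have hnn : (0:ℝ) ≤ dotProd n w w := Finset.sum_nonneg fun i _ => mul_self_nonneg _
    have hwwpos : 0 < dotProd n w w := hnn.lt_of_ne (Ne.symm h0)
    set s := Real.sqrt (dotProd n w w) with hs
    have hs0 : s ≠ 0 := (Real.sqrt_pos.2 hwwpos).ne'
    have hss : s * s = dotProd n w w := Real.mul_self_sqrt hwwpos.le
    set f := s⁻¹ • w with hf
    have hwf : w = s • f := by rw [hf, smul_smul, mul_inv_cancel₀ hs0, one_smul]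
    have hff : dotProd n f f = 1 := by
      rw [hf, dotProd_smul_left, dotProd_smul_right, ← hss]
      field_simp
    have hfe : dotProd n e f = 0 := by
      rw [hf, dotProd_smul_right, dotProd_comm e w, hwe, mul_zero]
    have hfV : dotProd n f V = 0 := by rw [hf, dotProd_smul_left, hwV, mul_zero]
    obtain ⟨hQ, hB⟩ := hyp V e f hV he hff hfe heV hfV
    have hB' : eval4 n T f V V e = 0 := by
      rw [eval4_middle T hskew₁ hskew₂ hpair, hB]
    rw [expand, hwf]
    simp only [eval4_smul1, eval4_smul4]
    rw [hB, hB', ← hQ]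
    have h1 : s * s = 1 - t * t := by rw [hss, hww]
    linear_combination (-(eval4 n T e V V e)) * h1

end Aux

/-- Let `T` be the Riemann curvature 4-tensor of a Riemannian
`n`-manifold (`n ≥ 3`) at a point `p` (expressed in orthonormal coordinates,
with its algebraic symmetries).  If for every unit vector `V` and every
orthonormal pair `e, f ⊥ V` one has `Rm(e,V,V,e) = Rm(f,V,V,f)` and
`Rm(e,V,V,f) = 0`, then all 2-planes at `p` have the same sectional curvature
`Rm(u,w,w,u)`. -/
theorem pointwise_constant_sectional_curvature (n : ℕ) (hn : 3 ≤ n)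
    (T : Fin n → Fin n → Fin n → Fin n → ℝ)
    (hskew₁ : ∀ a b c d, T a b c d = -T b a c d)
    (hskew₂ : ∀ a b c d, T a b c d = -T a b d c)
    (hpair : ∀ a b c d, T a b c d = T c d a b)
    (hyp : ∀ V e f : Fin n → ℝ,
      dotProd n V V = 1 → dotProd n e e = 1 → dotProd n f f = 1 →
      dotProd n e f = 0 → dotProd n e V = 0 → dotProd n f V = 0 →
      eval4 n T e V V e = eval4 n T f V V f ∧ eval4 n T e V V f = 0) :
    ∃ κ : ℝ, ∀ u w : Fin n → ℝ,
      dotProd n u u = 1 → dotProd n w w = 1 → dotProd n u w = 0 →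
      eval4 n T u w w u = κ := by
  classical
  have h0 : (0:ℕ) < n := by omega
  have h1 : (1:ℕ) < n := by omega
  set i0 : Fin n := ⟨0, h0⟩ with hi0
  set i1 : Fin n := ⟨1, h1⟩ with hi1
  have hi : i0 ≠ i1 := by simp [hi0, hi1, Fin.ext_iff]
  set u₀ : Fin n → ℝ := fun i => if i = i0 then 1 else 0 with hu₀
  set u₁ : Fin n → ℝ := fun i => if i = i1 then 1 else 0 with hu₁
  have hu00 : dotProd n u₀ u₀ = 1 := by
    have h : ∀ i, u₀ i * u₀ i = if i = i0 then 1 else 0 := fun i => by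
      rcases eq_or_ne i i0 with h|h <;> simp [hu₀, h]
    rw [dotProd, Finset.sum_congr rfl fun i _ => h i]
    simp
  have hu11 : dotProd n u₁ u₁ = 1 := by
    have h : ∀ i, u₁ i * u₁ i = if i = i1 then 1 else 0 := fun i => by
      rcases eq_or_ne i i1 with h|h <;> simp [hu₁, h]
    rw [dotProd, Finset.sum_congr rfl fun i _ => h i]
    simp
  have hu01 : dotProd n u₀ u₁ = 0 := by
    have h : ∀ i, u₀ i * u₁ i = 0 := fun i => by
      rcases eq_or_ne i i0 with h|h
      · have h' : i ≠ i1 := by rw [h]; exact hi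
        simp [hu₀, hu₁, h, h', hi]
      · simp [hu₀, h]
    rw [dotProd, Finset.sum_congr rfl fun i _ => h i]
    simp
  refine ⟨eval4 n T u₀ u₁ u₁ u₀, ?_⟩
  intro u w huu hww huw
  obtain ⟨x, hxx, hxw, hxu₁⟩ := Aux.exists_unit_orth hn w u₁
  have hwx : dotProd n w x = 0 := by rw [Aux.dotProd_comm]; exact hxw
  have hu₁x : dotProd n u₁ x = 0 := by rw [Aux.dotProd_comm]; exact hxu₁
  calc eval4 n T u w w u
      = eval4 n T x w w x :=
        Aux.keyA T hskew₁ hskew₂ hpair hyp w u x hww huu hxx huw hxw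
    _ = eval4 n T w x x w := Aux.eval4_pair T hpair _ _ _ _
    _ = eval4 n T u₁ x x u₁ :=
        Aux.keyA T hskew₁ hskew₂ hpair hyp x w u₁ hxx hww hu11 hwx hu₁x
    _ = eval4 n T x u₁ u₁ x := Aux.eval4_pair T hpair _ _ _ _
    _ = eval4 n T u₀ u₁ u₁ u₀ :=
        Aux.keyA T hskew₁ hskew₂ hpair hyp u₁ x u₀ hu11 hxx hu00 hxu₁ hu01
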